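/- Let 0 < q < 1 and let A(ω) = a₁ω + a₀, B(ω) = b₂ω² + b₁ω + b₀ be real polynomials. Suppose ϱ : ℝ → ℝ satisfies the q-Pearson equation in the functional form ϱ(ω)(B(ω) − (1−q)ω·A(ω)) = B(qω)·ϱ(qω) for all ω ∈ ℝ. For k ∈ ℕ define ϱ⁽ᵏ⁾(ω) := ϱ(qᵏω)·∏_{j=1}^{k} B(qʲω) and the degree ≤ 1 polynomial A⁽ᵏ⁾(ω) := qᵏ·A(qᵏω) + ∑_{j=0}^{k−1} qʲ·(b₂(1+q)qʲω + b₁). Then ϱ⁽ᵏ⁾ satisfies the q-Pearson equation for the pair (A⁽ᵏ⁾, B), i.e. ϱ⁽ᵏ⁾(ω)(B(ω) − (1−q)ω·A⁽ᵏ⁾(ω)) = B(qω)·ϱ⁽ᵏ⁾(qω) for all ω ∈ ℝ. -/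
import Mathlib

theorem stmt0_icc_prod (f : ℕ → ℝ) :
    ∀ k : ℕ, ∏ j ∈ Finset.Icc 1 k, f j = ∏ j ∈ Finset.range k, f (j + 1)
  | 0 => by simp
  | k + 1 => by
    rw [Finset.prod_Icc_succ_top (Nat.succ_le_succ (Nat.zero_le k)), Finset.prod_range_succ,
      stmt0_icc_prod f k]

theorem stmt0_aux (q a₀ a₁ b₀ b₁ b₂ : ℝ)
    (A B ϱ : ℝ → ℝ)
    (hA : ∀ ω : ℝ, A ω = a₁ * ω + a₀)
    (hB : ∀ ω : ℝ, B ω = b₂ * ω ^ 2 + b₁ * ω + b₀)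
    (hPearson : ∀ ω : ℝ, ϱ ω * (B ω - (1 - q) * ω * A ω) = B (q * ω) * ϱ (q * ω)) :
    ∀ (k : ℕ) (ω : ℝ),
      (ϱ (q ^ k * ω) * ∏ j ∈ Finset.range k, B (q ^ (j + 1) * ω)) *
        (B ω - (1 - q) * ω *
          (q ^ k * A (q ^ k * ω) +
            ∑ j ∈ Finset.range k, q ^ j * (b₂ * (1 + q) * q ^ j * ω + b₁))) =
      B (q * ω) *
        (ϱ (q ^ k * (q * ω)) * ∏ j ∈ Finset.range k, B (q ^ (j + 1) * (q * ω))) := by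
  intro k
  induction k with
  | zero =>
    intro ω
    simpa using hPearson ω
  | succ k ih =>
    intro ω
    -- product shift
    have hprod : ∀ x : ℝ,
        ∏ j ∈ Finset.range (k + 1), B (q ^ (j + 1) * x) =
          B (q * x) * ∏ j ∈ Finset.range k, B (q ^ (j + 1) * (q * x)) := by
      intro x
      rw [Finset.prod_range_succ' (fun j => B (q ^ (j + 1) * x)) k]
      rw [mul_comm]
      congr 1
      · norm_num
      · apply Finset.prod_congr rfl
        intro j _
        congr 1
        ring
    -- sum shift
    have hsum :
        ∑ j ∈ Finset.range (k + 1), q ^ j * (b₂ * (1 + q) * q ^ j * ω + b₁) =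
          (b₂ * (1 + q) * ω + b₁) +
            q * ∑ j ∈ Finset.range k, q ^ j * (b₂ * (1 + q) * q ^ j * (q * ω) + b₁) := by
      rw [Finset.sum_range_succ' (fun j => q ^ j * (b₂ * (1 + q) * q ^ j * ω + b₁)) k,
        Finset.mul_sum]
      rw [add_comm]
      congr 1
      · norm_num
      · apply Finset.sum_congr rfl
        intro j _
        ring
    -- the polynomial identity
    have hpoly :
        B ω - (1 - q) * ω *
            (q ^ (k + 1) * A (q ^ (k + 1) * ω) +
              ∑ j ∈ Finset.range (k + 1), q ^ j * (b₂ * (1 + q) * q ^ j * ω + b₁)) =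
          B (q * ω) - (1 - q) * (q * ω) *
            (q ^ k * A (q ^ k * (q * ω)) +
              ∑ j ∈ Finset.range k, q ^ j * (b₂ * (1 + q) * q ^ j * (q * ω) + b₁)) := by
      rw [hsum, hB, hB]
      have : q ^ (k + 1) * ω = q ^ k * (q * ω) := by ring
      rw [this]
      ring
    calc
      (ϱ (q ^ (k + 1) * ω) * ∏ j ∈ Finset.range (k + 1), B (q ^ (j + 1) * ω)) *
          (B ω - (1 - q) * ω *
            (q ^ (k + 1) * A (q ^ (k + 1) * ω) +
              ∑ j ∈ Finset.range (k + 1), q ^ j * (b₂ * (1 + q) * q ^ j * ω + b₁))) =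
        B (q * ω) *
          ((ϱ (q ^ k * (q * ω)) * ∏ j ∈ Finset.range k, B (q ^ (j + 1) * (q * ω))) *
            (B (q * ω) - (1 - q) * (q * ω) *
              (q ^ k * A (q ^ k * (q * ω)) +
                ∑ j ∈ Finset.range k, q ^ j * (b₂ * (1 + q) * q ^ j * (q * ω) + b₁)))) := by
        rw [hprod ω, hpoly]
        have : q ^ (k + 1) * ω = q ^ k * (q * ω) := by ring
        rw [this]; ring
      _ = B (q * ω) *
          (B (q * (q * ω)) *
            (ϱ (q ^ k * (q * (q * ω))) *
              ∏ j ∈ Finset.range k, B (q ^ (j + 1) * (q * (q * ω))))) := by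
        rw [ih (q * ω)]
      _ = B (q * ω) *
          (ϱ (q ^ (k + 1) * (q * ω)) *
            ∏ j ∈ Finset.range (k + 1), B (q ^ (j + 1) * (q * ω))) := by
        rw [hprod (q * ω)]
        have : q ^ (k + 1) * (q * ω) = q ^ k * (q * (q * ω)) := by ring
        rw [this]; ring

/-- Let `0 < q < 1` and let `A(ω) = a₁ω + a₀`, `B(ω) = b₂ω² + b₁ω + b₀`
be real polynomials.  Suppose `ϱ : ℝ → ℝ` satisfies the q-Pearson equation in the
functional form `ϱ(ω)(B(ω) − (1−q)ω·A(ω)) = B(qω)·ϱ(qω)` for all `ω`.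
For `k ∈ ℕ` define `ϱ⁽ᵏ⁾(ω) := ϱ(qᵏω)·∏_{j=1}^{k} B(qʲω)` and the degree `≤ 1` polynomial
`A⁽ᵏ⁾(ω) := qᵏ·A(qᵏω) + ∑_{j=0}^{k−1} qʲ·(b₂(1+q)qʲω + b₁)`.
Then `ϱ⁽ᵏ⁾` satisfies the q-Pearson equation for the pair `(A⁽ᵏ⁾, B)`. -/
theorem stmt_0 (q a₀ a₁ b₀ b₁ b₂ : ℝ) (hq0 : 0 < q) (hq1 : q < 1)
    (A B ϱ : ℝ → ℝ)
    (hA : ∀ ω : ℝ, A ω = a₁ * ω + a₀)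
    (hB : ∀ ω : ℝ, B ω = b₂ * ω ^ 2 + b₁ * ω + b₀)
    (hPearson : ∀ ω : ℝ, ϱ ω * (B ω - (1 - q) * ω * A ω) = B (q * ω) * ϱ (q * ω))
    (k : ℕ) (ϱk Ak : ℝ → ℝ)
    (hϱk : ∀ ω : ℝ, ϱk ω = ϱ (q ^ k * ω) * ∏ j ∈ Finset.Icc 1 k, B (q ^ j * ω))
    (hAk : ∀ ω : ℝ, Ak ω =
      q ^ k * A (q ^ k * ω) + ∑ j ∈ Finset.range k, q ^ j * (b₂ * (1 + q) * q ^ j * ω + b₁)) :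
    ∀ ω : ℝ, ϱk ω * (B ω - (1 - q) * ω * Ak ω) = B (q * ω) * ϱk (q * ω) := by
  intro ω
  rw [hϱk, hϱk, hAk, stmt0_icc_prod (fun j => B (q ^ j * ω)) k,
    stmt0_icc_prod (fun j => B (q ^ j * (q * ω))) k]
  exact stmt0_aux q a₀ a₁ b₀ b₁ b₂ A B ϱ hA hB hPearson k ω
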